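/- (Deterministic core of Theorem 1.) Let p be a probability distribution on {0,1}^n with Σ_x p(x)² ≤ α/2^n for some α ≥ 1. Let 0 < δ < 1 and 0 < ε < 1, and suppose λ > 0 satisfies 1 ≤ ε/λ ≤ 1 + 1/((10√α/δ) log(10√α/δ)). Set c = ⌈(1/λ) log(10√α/δ)⌉ and F = 10(n^c + 1)/δ. Suppose p̂' : {0,1}^n → ℝ satisfies p̂'(0^n) = 2^{-n} and |p̂(s) − p̂'(s)| ≤ 1/(2^n F) for every s with 1 ≤ |s| ≤ c. Define q(x) = Σ_{s: |s| ≤ c} (1−λ)^{|s|} p̂'(s) (−1)^{s·x} and p̃_A(x) = Σ_{s∈{0,1}^n} (1−ε)^{|s|} p̂(s) (−1)^{s·x}, and let r be a probability distribution on {0,1}^n with ||q − r||_1 = 2 Σ_{x: q(x) < 0} |q(x)|. Then ||p̃_A − r||_1 ≤ δ. -/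

import Mathlib

/-- Dot product of two bit strings, `s·x = Σ_j s_j x_j`. -/
def dot {n : ℕ} (s x : Fin n → Bool) : ℕ :=
  (Finset.univ.filter fun j => s j && x j).card

/-- Hamming weight `|s| = Σ_j s_j`. -/
def wt {n : ℕ} (s : Fin n → Bool) : ℕ :=
  (Finset.univ.filter fun j => s j).card

/-- Fourier coefficient `f̂(s) = 2^{-n} Σ_x f(x) (-1)^{s·x}`. -/
noncomputable def fhat {n : ℕ} (f : (Fin n → Bool) → ℝ) (s : Fin n → Bool) : ℝ :=
  (1 / 2 ^ n) * ∑ x, f x * (-1 : ℝ) ^ dot s x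

/-- The `l1` norm `‖f‖₁ = Σ_x |f(x)|`. -/
noncomputable def l1 {n : ℕ} (f : (Fin n → Bool) → ℝ) : ℝ :=
  ∑ x, |f x|

lemma pow_card_eq_prod {n : ℕ} (P : Fin n → Bool) (a : ℝ) :
    a ^ (Finset.univ.filter fun j => P j).card = ∏ j, (if P j then a else 1) := by
  rw [Finset.prod_ite, Finset.prod_const, Finset.prod_const, one_pow, mul_one]

lemma dot_comm {n : ℕ} (s x : Fin n → Bool) : dot s x = dot x s := by
  unfold dot; congr 1; ext j; simp [Bool.and_comm]

lemma wchar_eq_prod {n : ℕ} (a : ℝ) (s x : Fin n → Bool) :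
    a ^ wt s * (-1:ℝ) ^ dot s x
      = ∏ j, (if s j then a * (if x j then -1 else 1) else 1) := by
  rw [wt, dot, pow_card_eq_prod, pow_card_eq_prod, ← Finset.prod_mul_distrib]
  refine Finset.prod_congr rfl fun j _ => ?_
  cases hs : s j <;> cases hx : x j <;> simp

lemma sum_pi_bool {n : ℕ} (g : Fin n → Bool → ℝ) :
    ∑ s : Fin n → Bool, ∏ j, g j (s j) = ∏ j, (g j false + g j true) := by
  have h := Finset.prod_univ_sum (fun _ : Fin n => (Finset.univ : Finset Bool)) g
  rw [Fintype.piFinset_univ] at h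
  rw [← h]
  refine Finset.prod_congr rfl fun j _ => ?_
  simp [Fintype.sum_bool]; ring

lemma wchar2_eq_prod {n : ℕ} (a : ℝ) (s x y : Fin n → Bool) :
    a ^ wt s * ((-1:ℝ) ^ dot s x * (-1:ℝ) ^ dot s y)
      = ∏ j, (if s j then a * ((if x j then (-1:ℝ) else 1) * (if y j then (-1:ℝ) else 1)) else 1) := by
  have h1 := wchar_eq_prod a s x
  have h2 := wchar_eq_prod 1 s y
  rw [one_pow] at h2
  calc a ^ wt s * ((-1:ℝ) ^ dot s x * (-1:ℝ) ^ dot s y)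
      = (a ^ wt s * (-1:ℝ) ^ dot s x) * (1 * (-1:ℝ) ^ dot s y) := by ring
    _ = (∏ j, (if s j then a * (if x j then (-1:ℝ) else 1) else 1))
        * ∏ j, (if s j then (1:ℝ) * (if y j then (-1:ℝ) else 1) else 1) := by
          rw [h1, ← h2]
    _ = _ := by
          rw [← Finset.prod_mul_distrib]
          refine Finset.prod_congr rfl fun j _ => ?_
          cases hs : s j <;> simp <;> ring

lemma sum_wchar {n : ℕ} (a : ℝ) (x y : Fin n → Bool) :
    ∑ s : Fin n → Bool, a ^ wt s * ((-1:ℝ) ^ dot s x * (-1:ℝ) ^ dot s y)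
      = ∏ j, (1 + a * ((if x j then (-1:ℝ) else 1) * (if y j then (-1:ℝ) else 1))) := by
  have h : ∀ s : Fin n → Bool, a ^ wt s * ((-1:ℝ) ^ dot s x * (-1:ℝ) ^ dot s y)
      = ∏ j, (fun j (b : Bool) => if b then a * ((if x j then (-1:ℝ) else 1) * (if y j then (-1:ℝ) else 1)) else 1) j (s j) :=
    fun s => wchar2_eq_prod a s x y
  refine (Finset.sum_congr rfl fun s _ => h s).trans
    ((sum_pi_bool (fun j (b : Bool) => if b then a * ((if x j then (-1:ℝ) else 1) * (if y j then (-1:ℝ) else 1)) else 1)).trans ?_)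
  simp

lemma sum_char_char {n : ℕ} (x y : Fin n → Bool) :
    ∑ s : Fin n → Bool, (-1:ℝ) ^ dot s x * (-1:ℝ) ^ dot s y
      = if x = y then (2:ℝ)^n else 0 := by
  have h := sum_wchar (1:ℝ) x y
  simp only [one_pow, one_mul] at h
  rw [h]
  by_cases hxy : x = y
  · subst hxy
    rw [if_pos rfl]
    have : ∀ j : Fin n, (1 + (if x j then (-1:ℝ) else 1) * (if x j then (-1:ℝ) else 1)) = 2 := by
      intro j; cases hx : x j <;> simp <;> norm_num
    rw [Finset.prod_congr rfl fun j _ => this j, Finset.prod_const]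
    simp
  · rw [if_neg hxy]
    obtain ⟨j, hj⟩ := Function.ne_iff.mp hxy
    refine Finset.prod_eq_zero (Finset.mem_univ j) ?_
    cases hx : x j <;> cases hy : y j <;> simp [hx, hy] at hj ⊢ <;> norm_num

lemma sum_char_char' {n : ℕ} (s t : Fin n → Bool) :
    ∑ x : Fin n → Bool, (-1:ℝ) ^ dot s x * (-1:ℝ) ^ dot t x
      = if s = t then (2:ℝ)^n else 0 := by
  have : ∀ x : Fin n → Bool, (-1:ℝ) ^ dot s x * (-1:ℝ) ^ dot t x
      = (-1:ℝ) ^ dot x s * (-1:ℝ) ^ dot x t := by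
    intro x; rw [dot_comm s x, dot_comm t x]
  rw [Finset.sum_congr rfl fun x _ => this x, sum_char_char]

lemma parseval {n : ℕ} (b : (Fin n → Bool) → ℝ) :
    ∑ x : Fin n → Bool, (∑ s, b s * (-1:ℝ) ^ dot s x)^2 = 2^n * ∑ s, (b s)^2 := by
  have expand : ∀ x : Fin n → Bool, (∑ s, b s * (-1:ℝ) ^ dot s x)^2
      = ∑ s, ∑ t, (b s * b t) * ((-1:ℝ) ^ dot s x * (-1:ℝ) ^ dot t x) := by
    intro x
    rw [sq, Finset.sum_mul_sum]
    exact Finset.sum_congr rfl fun s _ => Finset.sum_congr rfl fun t _ => by ring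
  rw [Finset.sum_congr rfl fun x _ => expand x, Finset.sum_comm]
  have : ∀ s : Fin n → Bool,
      (∑ x : Fin n → Bool, ∑ t, (b s * b t) * ((-1:ℝ) ^ dot s x * (-1:ℝ) ^ dot t x))
        = 2^n * (b s)^2 := by
    intro s
    rw [Finset.sum_comm]
    have inner : ∀ t : Fin n → Bool,
        (∑ x : Fin n → Bool, (b s * b t) * ((-1:ℝ) ^ dot s x * (-1:ℝ) ^ dot t x))
          = (b s * b t) * (if s = t then (2:ℝ)^n else 0) := by
      intro t; rw [← Finset.mul_sum, sum_char_char']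
    rw [Finset.sum_congr rfl fun t _ => inner t]
    simp [mul_ite, Finset.sum_ite_eq, sq]
    ring
  rw [Finset.sum_congr rfl fun s _ => this s, ← Finset.mul_sum]

lemma inversion {n : ℕ} (f : (Fin n → Bool) → ℝ) (x : Fin n → Bool) :
    ∑ s, fhat f s * (-1:ℝ) ^ dot s x = f x := by
  unfold fhat
  have : ∀ s : Fin n → Bool, ((1:ℝ) / 2 ^ n) * (∑ y, f y * (-1:ℝ) ^ dot s y) * (-1:ℝ) ^ dot s x
      = ∑ y, ((1:ℝ)/2^n) * f y * ((-1:ℝ) ^ dot s y * (-1:ℝ) ^ dot s x) := by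
    intro s
    rw [Finset.mul_sum, Finset.sum_mul]
    exact Finset.sum_congr rfl fun y _ => by ring
  rw [Finset.sum_congr rfl fun s _ => this s, Finset.sum_comm]
  have inner : ∀ y : Fin n → Bool,
      (∑ s : Fin n → Bool, ((1:ℝ)/2^n) * f y * ((-1:ℝ) ^ dot s y * (-1:ℝ) ^ dot s x))
        = ((1:ℝ)/2^n) * f y * (if y = x then (2:ℝ)^n else 0) := by
    intro y; rw [← Finset.mul_sum, sum_char_char]
  rw [Finset.sum_congr rfl fun y _ => inner y]
  simp [mul_ite, Finset.sum_ite_eq', Finset.mem_univ]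
  field_simp

lemma pow_sub_pow_le' {a b : ℝ} (hb : 0 ≤ b) (hba : b ≤ a) (ha : a ≤ 1) (k : ℕ) :
    a^k - b^k ≤ k * (a - b) * a^(k-1) := by
  have h := geom_sum₂_mul a b k
  have hs : (∑ i ∈ Finset.range k, a^i * b^(k-1-i)) ≤ k * a^(k-1) := by
    calc (∑ i ∈ Finset.range k, a^i * b^(k-1-i))
        ≤ ∑ i ∈ Finset.range k, a^(k-1) := by
          refine Finset.sum_le_sum fun i hi => ?_
          have h1 : a^i * b^(k-1-i) ≤ a^i * a^(k-1-i) := by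
            have := pow_le_pow_left₀ hb hba (k-1-i)
            have hai : (0:ℝ) ≤ a^i := pow_nonneg (le_trans hb hba) i
            nlinarith
          have h2 : a^i * a^(k-1-i) = a^(k-1) := by
            rw [← pow_add]; congr 1
            simp only [Finset.mem_range] at hi; omega
          linarith
      _ = k * a^(k-1) := by rw [Finset.sum_const, Finset.card_range, nsmul_eq_mul]
  calc a^k - b^k = (∑ i ∈ Finset.range k, a^i * b^(k-1-i)) * (a - b) := h.symm
    _ ≤ (k * a^(k-1)) * (a - b) := mul_le_mul_of_nonneg_right hs (by linarith)
    _ = k * (a - b) * a^(k-1) := by ring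

lemma mul_pow_le_one' {lam : ℝ} (h0 : 0 ≤ lam) (h1 : lam ≤ 1) (k : ℕ) :
    (k : ℝ) * lam * (1 - lam)^(k-1) ≤ 1 := by
  cases k with
  | zero => simp
  | succ m =>
    have hb := add_pow lam (1-lam) (m+1)
    have hone : (1:ℝ) = ∑ i ∈ Finset.range (m+2),
        lam^i * (1-lam)^(m+1-i) * ((m+1).choose i : ℝ) := by
      rw [← hb]; norm_num
    have hterm : lam^1 * (1-lam)^(m+1-1) * ((m+1).choose 1 : ℝ)
        ≤ ∑ i ∈ Finset.range (m+2), lam^i * (1-lam)^(m+1-i) * ((m+1).choose i : ℝ) := by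
      refine Finset.single_le_sum (f := fun i => lam^i * (1-lam)^(m+1-i) * ((m+1).choose i : ℝ)) (s := Finset.range (m+2)) (a := 1) (fun i _ => ?_) (Finset.mem_range.mpr (by omega))
      have : (0:ℝ) ≤ 1 - lam := by linarith
      positivity
    rw [Nat.choose_one_right] at hterm
    norm_num at hterm
    have : ((m+1 : ℕ) : ℝ) * lam * (1 - lam)^(m+1-1) = lam * (1-lam)^m * ((m+1:ℕ) : ℝ) := by
      push_cast; ring_nf
    rw [this]
    calc lam * (1-lam)^m * ((m+1:ℕ) : ℝ)
        ≤ ∑ i ∈ Finset.range (m+2), lam^i * (1-lam)^(m+1-i) * ((m+1).choose i : ℝ) := by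
          push_cast at hterm ⊢; linarith
      _ = 1 := hone.symm

lemma sum_choose_le (n : ℕ) : ∀ c : ℕ, 1 ≤ c → (∑ k ∈ Finset.Icc 1 c, n.choose k) ≤ n ^ c := by
  intro c hc
  induction c with
  | zero => omega
  | succ m ih =>
    by_cases hm : 1 ≤ m
    · have h1 := ih hm
      rw [Finset.sum_Icc_succ_top (by omega : 1 ≤ m + 1)]
      have h2 : 2 * n.choose (m+1) ≤ n^(m+1) := by
        have hd := Nat.descFactorial_eq_factorial_mul_choose n (m+1)
        have hdp := Nat.descFactorial_le_pow n (m+1)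
        have hf : 2 ≤ Nat.factorial (m+1) := le_trans (by omega) (Nat.self_le_factorial (m+1))
        calc 2 * n.choose (m+1) ≤ Nat.factorial (m+1) * n.choose (m+1) :=
              Nat.mul_le_mul_right _ hf
          _ = n.descFactorial (m+1) := hd.symm
          _ ≤ n^(m+1) := hdp
      rcases Nat.lt_or_ge n 2 with hn | hn
      · interval_cases n
        · have e1 : (0:ℕ)^m = 0 := Nat.zero_pow (by omega)
          have e2 : Nat.choose 0 (m+1) = 0 := Nat.choose_eq_zero_of_lt (by omega)
          have e3 : (0:ℕ)^(m+1) = 0 := Nat.zero_pow (by omega)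
          omega
        · have e1 : (1:ℕ)^m = 1 := one_pow m
          have e2 : Nat.choose 1 (m+1) = 0 := Nat.choose_eq_zero_of_lt (by omega)
          have e3 : (1:ℕ)^(m+1) = 1 := one_pow (m+1)
          omega
      · have h3 : 2 * n^m ≤ n^(m+1) := by
          rw [pow_succ]
          calc 2 * n^m = n^m * 2 := by ring
            _ ≤ n^m * n := Nat.mul_le_mul_left _ hn
        omega
    · have hm0 : m = 0 := by omega
      subst hm0
      simp [Nat.choose_one_right]

lemma card_low_wt {n c : ℕ} (hc : 1 ≤ c) :
    (Finset.univ.filter fun s : Fin n → Bool => 1 ≤ wt s ∧ wt s ≤ c).card ≤ n ^ c := by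
  classical
  set T := (Finset.univ : Finset (Finset (Fin n))).filter (fun u => 1 ≤ u.card ∧ u.card ≤ c) with hT
  have step1 : (Finset.univ.filter fun s : Fin n → Bool => 1 ≤ wt s ∧ wt s ≤ c).card ≤ T.card := by
    refine Finset.card_le_card_of_injOn (fun s => Finset.univ.filter (fun j => s j)) ?_ ?_
    · intro s hs
      simp only [Finset.mem_coe, Finset.mem_filter, Finset.mem_univ, true_and] at hs
      simp only [hT, Finset.mem_coe, Finset.mem_filter, Finset.mem_univ, true_and]
      unfold wt at hs
      exact hs
    · intro s _ t _ h
      funext j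
      have := Finset.ext_iff.mp h j
      simp only [Finset.mem_filter, Finset.mem_univ, true_and] at this
      cases hs : s j <;> cases ht : t j <;> simp [hs, ht] at this ⊢ <;> tauto
  have step2 : T = (Finset.Icc 1 c).biUnion
      (fun k => Finset.powersetCard k (Finset.univ : Finset (Fin n))) := by
    ext u
    simp only [hT, Finset.mem_filter, Finset.mem_univ, true_and, Finset.mem_biUnion,
      Finset.mem_Icc, Finset.mem_powersetCard_univ]
    constructor
    · rintro ⟨h1, h2⟩; exact ⟨u.card, ⟨h1, h2⟩, rfl⟩
    · rintro ⟨k, ⟨h1, h2⟩, rfl⟩; exact ⟨h1, h2⟩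
  have step3 : T.card = ∑ k ∈ Finset.Icc 1 c, n.choose k := by
    rw [step2, Finset.card_biUnion]
    · refine Finset.sum_congr rfl fun k _ => ?_
      rw [Finset.card_powersetCard]
      simp
    · intro a _ b _ hab
      simp only [Finset.disjoint_left]
      intro u hu hv
      rw [Finset.mem_powersetCard_univ] at hu hv
      exact hab (hu ▸ hv ▸ rfl)
  calc _ ≤ T.card := step1
    _ = ∑ k ∈ Finset.Icc 1 c, n.choose k := step3
    _ ≤ n ^ c := sum_choose_le n c hc

lemma noise_nonneg {n : ℕ} (p : (Fin n → Bool) → ℝ) (hp0 : ∀ x, 0 ≤ p x) (a : ℝ)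
    (ha0 : 0 ≤ a) (ha1 : a ≤ 1) (x : Fin n → Bool) :
    0 ≤ ∑ s, a ^ wt s * fhat p s * (-1:ℝ) ^ dot s x := by
  have step : ∀ s : Fin n → Bool, a ^ wt s * fhat p s * (-1:ℝ) ^ dot s x
      = ∑ y, ((1:ℝ)/2^n) * p y * (a ^ wt s * ((-1:ℝ) ^ dot s y * (-1:ℝ) ^ dot s x)) := by
    intro s
    simp only [fhat, Finset.mul_sum, Finset.sum_mul]
    exact Finset.sum_congr rfl fun y _ => by ring
  rw [Finset.sum_congr rfl fun s _ => step s, Finset.sum_comm]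
  refine Finset.sum_nonneg fun y _ => ?_
  rw [← Finset.mul_sum, sum_wchar]
  refine mul_nonneg (mul_nonneg (by positivity) (hp0 y)) (Finset.prod_nonneg fun j _ => ?_)
  cases hy : y j <;> cases hx : x j <;> simp [hy, hx] <;> linarith

set_option maxHeartbeats 2000000 in
theorem stmt7 {n : ℕ} (p phat' q ptA r : (Fin n → Bool) → ℝ) (α δ ε lam : ℝ)
    (hp0 : ∀ x, 0 ≤ p x) (hp1 : ∑ x, p x = 1)
    (hα : 1 ≤ α) (hp2 : ∑ x, p x ^ 2 ≤ α / 2 ^ n)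
    (hδ0 : 0 < δ) (hδ1 : δ < 1) (hε0 : 0 < ε) (hε1 : ε < 1) (hlam : 0 < lam)
    (hratio1 : 1 ≤ ε / lam)
    (hratio2 : ε / lam
      ≤ 1 + 1 / ((10 * Real.sqrt α / δ) * Real.logb 2 (10 * Real.sqrt α / δ)))
    (c : ℕ) (hc : c = ⌈(1 / lam) * Real.logb 2 (10 * Real.sqrt α / δ)⌉₊)
    (F : ℝ) (hF : F = 10 * ((n : ℝ) ^ c + 1) / δ)
    (h0 : phat' (fun _ => false) = 1 / 2 ^ n)
    (happrox : ∀ s, 1 ≤ wt s → wt s ≤ c → |fhat p s - phat' s| ≤ 1 / (2 ^ n * F))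
    (hq : ∀ x, q x = ∑ s ∈ Finset.univ.filter (fun s : Fin n → Bool => wt s ≤ c),
        (1 - lam) ^ wt s * phat' s * (-1 : ℝ) ^ dot s x)
    (hA : ∀ x, ptA x = ∑ s, (1 - ε) ^ wt s * fhat p s * (-1 : ℝ) ^ dot s x)
    (hr0 : ∀ x, 0 ≤ r x) (hr1 : ∑ x, r x = 1)
    (hqr : l1 (fun x => q x - r x)
      = 2 * ∑ x ∈ Finset.univ.filter (fun x : Fin n → Bool => q x < 0), |q x|) :
    l1 (fun x => ptA x - r x) ≤ δ := by
  classical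
  set A : ℝ := 10 * Real.sqrt α / δ with hAdef
  set L : ℝ := Real.logb 2 A with hLdef
  have hα0 : (0:ℝ) < α := by linarith
  have hsq : 1 ≤ Real.sqrt α := by
    nlinarith [Real.sq_sqrt hα0.le, Real.sqrt_nonneg α]
  have hA2 : 2 ≤ A := by
    rw [hAdef, le_div_iff₀ hδ0]; nlinarith
  have hA0 : (0:ℝ) < A := by linarith
  have hL1 : 1 ≤ L := by
    rw [hLdef, show (1:ℝ) = Real.logb 2 2 by simp]
    exact Real.logb_le_logb_of_le (by norm_num) (by norm_num) hA2
  have hL0 : (0:ℝ) < L := by linarith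
  have hlamle : lam ≤ ε := (one_le_div hlam).mp hratio1
  have hlam1 : lam < 1 := lt_of_le_of_lt hlamle hε1
  have hεlam : ε - lam ≤ lam / (A * L) := by
    have h := hratio2
    rw [div_le_iff₀ hlam] at h
    have : (1 + 1/(A*L)) * lam = lam + lam/(A*L) := by field_simp
    linarith [this ▸ h]
  set E : ℝ := 1 / A with hEdef
  have hE0 : 0 < E := by positivity
  have hEval : E = δ / (10 * Real.sqrt α) := by
    rw [hEdef, hAdef]; rw [one_div_div]
  have hc1 : 1 ≤ c := by
    rw [hc]; rw [Nat.one_le_ceil_iff]; positivity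
  have hcL : L ≤ lam * c := by
    have h1 : (1/lam) * L ≤ (c:ℝ) := by
      rw [hc]; exact Nat.le_ceil _
    have h2 : lam * ((1/lam) * L) ≤ lam * c := by
      exact mul_le_mul_of_nonneg_left h1 hlam.le
    have h3 : lam * ((1/lam) * L) = L := by field_simp
    linarith
  have h1lam : (0:ℝ) ≤ 1 - lam := by linarith
  have h1ε : (0:ℝ) ≤ 1 - ε := by linarith
  have hle1 : (1-ε) ≤ (1-lam) := by linarith
  have hpowc : (1 - lam)^c ≤ E := by
    have step1 : (1-lam) ≤ (2:ℝ) ^ (-lam) := by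
      have h2 : (2:ℝ) ^ (-lam) = Real.exp (-lam * Real.log 2) := by
        rw [Real.rpow_def_of_pos (by norm_num)]; ring_nf
      rw [h2]
      have he := Real.add_one_le_exp (-lam * Real.log 2)
      have hlog1 : Real.log 2 ≤ 1 := by
        have := Real.log_le_sub_one_of_pos (by norm_num : (0:ℝ) < 2); linarith
      have hlog0 : 0 ≤ Real.log 2 := Real.log_nonneg (by norm_num)
      nlinarith
    calc (1-lam)^c ≤ ((2:ℝ)^(-lam))^c := pow_le_pow_left₀ h1lam step1 c
      _ = (2:ℝ)^(-(lam * c)) := by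
          rw [← Real.rpow_natCast ((2:ℝ)^(-lam)) c, ← Real.rpow_mul (by norm_num)]
          ring_nf
      _ ≤ (2:ℝ)^(-L) := Real.rpow_le_rpow_of_exponent_le (by norm_num) (by linarith)
      _ = E := by
          rw [Real.rpow_neg (by norm_num), Real.rpow_logb (by norm_num) (by norm_num) hA0,
            hEdef, one_div]
  have keybound : ∀ k : ℕ, |(1 - ε)^k - (if k ≤ c then (1-lam)^k else 0)| ≤ E := by
    intro k
    by_cases hk : k ≤ c
    · rw [if_pos hk]
      have hd : (1-lam)^k - (1-ε)^k ≤ k * ((1-lam)-(1-ε)) * (1-lam)^(k-1) :=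
        pow_sub_pow_le' h1ε hle1 (by linarith) k
      have habs : |(1-ε)^k - (1-lam)^k| = (1-lam)^k - (1-ε)^k := by
        rw [abs_sub_comm, abs_of_nonneg (sub_nonneg.mpr (pow_le_pow_left₀ h1ε hle1 k))]
      rw [habs]
      have hkp : (k:ℝ) * lam * (1-lam)^(k-1) ≤ 1 := mul_pow_le_one' hlam.le (by linarith) k
      have h2 : (k:ℝ) * ((1-lam)-(1-ε)) * (1-lam)^(k-1)
          = ((k:ℝ) * lam * (1-lam)^(k-1)) * ((ε-lam)/lam) := by
        field_simp; ring
      have h3 : (ε - lam)/lam ≤ 1/(A*L) := by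
        have hAL : (0:ℝ) < A * L := by positivity
        rw [div_le_div_iff₀ hlam hAL]
        have := mul_le_mul_of_nonneg_right hεlam (le_of_lt hAL)
        have heq : lam / (A*L) * (A*L) = lam := by field_simp
        linarith [heq ▸ this]
      have h4 : 1/(A*L) ≤ E := by
        rw [hEdef]
        apply one_div_le_one_div_of_le hA0
        nlinarith
      have hEnn : 0 ≤ (ε - lam)/lam := div_nonneg (by linarith) hlam.le
      have hmain : (k:ℝ) * ((1-lam)-(1-ε)) * (1-lam)^(k-1) ≤ E := by
        rw [h2]
        calc ((k:ℝ) * lam * (1-lam)^(k-1)) * ((ε-lam)/lam) ≤ 1 * ((ε-lam)/lam) := by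
              apply mul_le_mul_of_nonneg_right hkp hEnn
          _ = (ε-lam)/lam := one_mul _
          _ ≤ 1/(A*L) := h3
          _ ≤ E := h4
      linarith
    · rw [if_neg hk, sub_zero, abs_of_nonneg (pow_nonneg h1ε k)]
      calc (1-ε)^k ≤ (1-lam)^k := pow_le_pow_left₀ h1ε hle1 k
        _ ≤ (1-lam)^c := pow_le_pow_of_le_one h1lam (by linarith) (by omega)
        _ ≤ E := hpowc
  -- Fourier data
  have hcard : (Finset.univ : Finset (Fin n → Bool)).card = 2^n := by
    simp [Finset.card_univ]
  have h2n : (0:ℝ) < 2^n := by positivity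
  have hfp0 : fhat p (fun _ => false) = 1/2^n := by
    unfold fhat
    have hdot : ∀ x : Fin n → Bool, dot (fun _ => false) x = 0 := by
      intro x; simp [dot]
    have : ∀ x : Fin n → Bool, p x * (-1:ℝ) ^ dot (fun _ => false) x = p x := by
      intro x; rw [hdot x]; simp
    rw [Finset.sum_congr rfl fun x _ => this x, hp1, mul_one]
  have hwt0 : ∀ s : Fin n → Bool, wt s = 0 → s = (fun _ => false) := by
    intro s h
    funext j
    have he : (Finset.univ.filter fun j => s j) = ∅ := Finset.card_eq_zero.mp h
    have := Finset.eq_empty_iff_forall_notMem.mp he j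
    simp only [Finset.mem_filter, Finset.mem_univ, true_and] at this
    simpa using this
  set b1 : (Fin n → Bool) → ℝ :=
    fun s => ((1-ε)^(wt s) - (if wt s ≤ c then (1-lam)^(wt s) else 0)) * fhat p s with hb1def
  set b2 : (Fin n → Bool) → ℝ :=
    fun s => if 1 ≤ wt s ∧ wt s ≤ c then (1-lam)^(wt s) * (fhat p s - phat' s) else 0 with hb2def
  have hsplit : ∀ x, ptA x - q x
      = (∑ s, b1 s * (-1:ℝ)^dot s x) + (∑ s, b2 s * (-1:ℝ)^dot s x) := by
    intro x
    rw [hA, hq, Finset.sum_filter, ← Finset.sum_add_distrib, ← Finset.sum_sub_distrib]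
    refine Finset.sum_congr rfl fun s _ => ?_
    simp only [hb1def, hb2def]
    by_cases h1 : wt s ≤ c
    · by_cases h2 : 1 ≤ wt s
      · rw [if_pos h1, if_pos h1, if_pos (And.intro h2 h1)]; ring
      · have hw0 : wt s = 0 := by omega
        have hs0 : s = (fun _ => false) := hwt0 s hw0
        rw [if_pos h1, if_pos h1, if_neg (by omega : ¬(1 ≤ wt s ∧ wt s ≤ c))]
        rw [hs0, hfp0, h0]
        ring
    · rw [if_neg h1, if_neg h1, if_neg (by tauto : ¬(1 ≤ wt s ∧ wt s ≤ c))]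
      ring
  -- Parseval for p
  have hparp : ∑ s, (fhat p s)^2 ≤ α / (2^n * 2^n) := by
    have hinv : ∀ x, (∑ s, fhat p s * (-1:ℝ)^dot s x) = p x := fun x => inversion p x
    have hpars := parseval (fhat p)
    rw [Finset.sum_congr rfl fun x _ => congrArg (· ^ 2) (hinv x)] at hpars
    have : ∑ x, p x ^ 2 = 2^n * ∑ s, (fhat p s)^2 := hpars
    rw [div_mul_eq_div_div]
    rw [le_div_iff₀ h2n]
    calc (∑ s, (fhat p s)^2) * 2^n = 2^n * ∑ s, (fhat p s)^2 := by ring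
      _ = ∑ x, p x ^ 2 := this.symm
      _ ≤ α / 2^n := hp2
  -- Bound 1
  have hb1bound : ∀ s, (b1 s)^2 ≤ E^2 * (fhat p s)^2 := by
    intro s
    rw [hb1def]
    have hk := keybound (wt s)
    have h1 : |((1-ε)^(wt s) - (if wt s ≤ c then (1-lam)^(wt s) else 0)) * fhat p s|
        = |(1-ε)^(wt s) - (if wt s ≤ c then (1-lam)^(wt s) else 0)| * |fhat p s| := abs_mul _ _
    have h2 : (((1-ε)^(wt s) - (if wt s ≤ c then (1-lam)^(wt s) else 0)) * fhat p s)^2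
        = |(1-ε)^(wt s) - (if wt s ≤ c then (1-lam)^(wt s) else 0)|^2 * |fhat p s|^2 := by
      rw [← mul_pow, ← h1, sq_abs]
    rw [h2, ← sq_abs (fhat p s)]
    have hnn := abs_nonneg ((1-ε)^(wt s) - (if wt s ≤ c then (1-lam)^(wt s) else 0))
    have hXE : |(1-ε)^(wt s) - (if wt s ≤ c then (1-lam)^(wt s) else 0)|^2 ≤ E^2 := by
      nlinarith
    exact mul_le_mul_of_nonneg_right hXE (sq_nonneg _)
  have bound1 : l1 (fun x => ∑ s, b1 s * (-1:ℝ)^dot s x) ≤ δ/10 := by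
    set f1 : (Fin n → Bool) → ℝ := fun x => ∑ s, b1 s * (-1:ℝ)^dot s x with hf1
    have hnn : 0 ≤ l1 f1 := Finset.sum_nonneg fun x _ => abs_nonneg _
    have hcheb : (l1 f1)^2 ≤ 2^n * ∑ x, (f1 x)^2 := by
      have h := sq_sum_le_card_mul_sum_sq
        (s := (Finset.univ : Finset (Fin n → Bool))) (f := fun x => |f1 x|)
      rw [hcard] at h
      unfold l1
      calc (∑ x, |f1 x|)^2 ≤ (2^n : ℕ) * ∑ x, |f1 x|^2 := h
        _ = 2^n * ∑ x, (f1 x)^2 := by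
            push_cast
            rw [Finset.sum_congr rfl fun x _ => sq_abs (f1 x)]
    have hpar1 : ∑ x, (f1 x)^2 = 2^n * ∑ s, (b1 s)^2 := parseval b1
    have hsum1 : ∑ s, (b1 s)^2 ≤ E^2 * (α/(2^n*2^n)) := by
      calc ∑ s, (b1 s)^2 ≤ ∑ s, E^2 * (fhat p s)^2 := Finset.sum_le_sum fun s _ => hb1bound s
        _ = E^2 * ∑ s, (fhat p s)^2 := by rw [Finset.mul_sum]
        _ ≤ E^2 * (α/(2^n*2^n)) := by
            apply mul_le_mul_of_nonneg_left hparp (by positivity)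
    have hsq2 : (l1 f1)^2 ≤ (δ/10)^2 := by
      have hEα : E^2 * α = (δ/10)^2 := by
        rw [hEval]
        rw [div_pow, div_pow, mul_pow]
        rw [Real.sq_sqrt hα0.le]
        field_simp
      calc (l1 f1)^2 ≤ 2^n * (2^n * ∑ s, (b1 s)^2) := by rw [← hpar1]; exact hcheb
        _ ≤ 2^n * (2^n * (E^2 * (α/(2^n*2^n)))) := by
            apply mul_le_mul_of_nonneg_left _ h2n.le
            exact mul_le_mul_of_nonneg_left hsum1 h2n.le
        _ = E^2 * α := by field_simp
        _ = (δ/10)^2 := hEα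
    nlinarith
  -- Bound 2
  have hF0 : 0 < F := by rw [hF]; positivity
  have bound2 : l1 (fun x => ∑ s, b2 s * (-1:ℝ)^dot s x) ≤ δ/10 := by
    set T := Finset.univ.filter (fun s : Fin n → Bool => 1 ≤ wt s ∧ wt s ≤ c) with hT
    have hptw : ∀ x : Fin n → Bool, |∑ s, b2 s * (-1:ℝ)^dot s x| ≤ (n:ℝ)^c * (1/(2^n * F)) := by
      intro x
      calc |∑ s, b2 s * (-1:ℝ)^dot s x| ≤ ∑ s, |b2 s * (-1:ℝ)^dot s x| :=
            Finset.abs_sum_le_sum_abs _ _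
        _ = ∑ s, |b2 s| := by
            refine Finset.sum_congr rfl fun s _ => ?_
            rw [abs_mul, abs_pow, abs_neg, abs_one, one_pow, mul_one]
        _ = ∑ s ∈ T, |b2 s| := by
            symm
            apply Finset.sum_subset (Finset.subset_univ T)
            intro s _ hs
            rw [hT, Finset.mem_filter] at hs
            push_neg at hs
            simp only [hb2def]
            rw [if_neg (by intro hcon; exact absurd hcon.2 (Nat.not_le.mpr (hs (Finset.mem_univ s) hcon.1)))]
            exact abs_zero
        _ ≤ ∑ s ∈ T, 1/(2^n * F) := by
            refine Finset.sum_le_sum fun s hs => ?_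
            rw [hT, Finset.mem_filter] at hs
            obtain ⟨-, h1, h2⟩ := hs
            simp only [hb2def]
            rw [if_pos (And.intro h1 h2), abs_mul]
            have hh := happrox s h1 h2
            have hp1' : |(1-lam)^(wt s)| ≤ 1 := by
              rw [abs_of_nonneg (pow_nonneg h1lam _)]
              exact pow_le_one₀ h1lam (by linarith)
            calc |(1-lam)^(wt s)| * |fhat p s - phat' s| ≤ 1 * (1/(2^n*F)) := by
                  apply mul_le_mul hp1' hh (abs_nonneg _) zero_le_one
              _ = 1/(2^n*F) := one_mul _
        _ = T.card * (1/(2^n * F)) := by rw [Finset.sum_const, nsmul_eq_mul]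
        _ ≤ (n:ℝ)^c * (1/(2^n * F)) := by
            apply mul_le_mul_of_nonneg_right _ (by positivity)
            have := card_low_wt (n := n) hc1
            rw [← hT] at this
            calc (T.card : ℝ) ≤ ((n^c : ℕ) : ℝ) := by exact_mod_cast this
              _ = (n:ℝ)^c := by push_cast; ring
      
    have : l1 (fun x => ∑ s, b2 s * (-1:ℝ)^dot s x) ≤ 2^n * ((n:ℝ)^c * (1/(2^n * F))) := by
      unfold l1
      calc ∑ x : Fin n → Bool, |∑ s, b2 s * (-1:ℝ)^dot s x|
          ≤ ∑ x : Fin n → Bool, (n:ℝ)^c * (1/(2^n * F)) :=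
            Finset.sum_le_sum fun x _ => hptw x
        _ = 2^n * ((n:ℝ)^c * (1/(2^n * F))) := by
            rw [Finset.sum_const, hcard, nsmul_eq_mul]; push_cast; ring
    have hfinal : (2:ℝ)^n * ((n:ℝ)^c * (1/(2^n * F))) ≤ δ/10 := by
      have h1 : (2:ℝ)^n * ((n:ℝ)^c * (1/(2^n * F))) = (n:ℝ)^c / F := by
        field_simp
      rw [h1, hF]
      rw [div_le_iff₀ (by positivity : (0:ℝ) < 10 * ((n:ℝ)^c + 1) / δ)]
      have hnc : (0:ℝ) ≤ (n:ℝ)^c := by positivity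
      have : δ/10 * (10 * ((n:ℝ)^c+1)/δ) = (n:ℝ)^c + 1 := by field_simp
      rw [this]
      linarith
    linarith
  -- Assemble
  have hptA0 : ∀ x, 0 ≤ ptA x := by
    intro x
    rw [hA x]
    exact noise_nonneg p hp0 (1-ε) h1ε (by linarith) x
  have htri1 : l1 (fun x => ptA x - q x) ≤ δ/5 := by
    unfold l1
    calc ∑ x : Fin n → Bool, |ptA x - q x|
        ≤ ∑ x : Fin n → Bool, (|∑ s, b1 s * (-1:ℝ)^dot s x| + |∑ s, b2 s * (-1:ℝ)^dot s x|) := by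
          refine Finset.sum_le_sum fun x _ => ?_
          rw [hsplit x]
          exact abs_add_le _ _
      _ = (∑ x : Fin n → Bool, |∑ s, b1 s * (-1:ℝ)^dot s x|)
          + (∑ x : Fin n → Bool, |∑ s, b2 s * (-1:ℝ)^dot s x|) := Finset.sum_add_distrib
      _ ≤ δ/10 + δ/10 := add_le_add bound1 bound2
      _ = δ/5 := by ring
  have hqrle : l1 (fun x => q x - r x) ≤ 2 * l1 (fun x => ptA x - q x) := by
    rw [hqr]
    have h1 : ∑ x ∈ Finset.univ.filter (fun x : Fin n → Bool => q x < 0), |q x|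
        ≤ ∑ x ∈ Finset.univ.filter (fun x : Fin n → Bool => q x < 0), |ptA x - q x| := by
      refine Finset.sum_le_sum fun x hx => ?_
      have hqx : q x < 0 := (Finset.mem_filter.mp hx).2
      have hpx := hptA0 x
      calc |q x| = -q x := abs_of_neg hqx
        _ ≤ ptA x - q x := by linarith
        _ ≤ |ptA x - q x| := le_abs_self _
    have h2 : ∑ x ∈ Finset.univ.filter (fun x : Fin n → Bool => q x < 0), |ptA x - q x|
        ≤ ∑ x : Fin n → Bool, |ptA x - q x| :=
      Finset.sum_le_sum_of_subset_of_nonneg (Finset.filter_subset _ _)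
        (fun _ _ _ => abs_nonneg _)
    unfold l1
    linarith
  have htri2 : l1 (fun x => ptA x - r x)
      ≤ l1 (fun x => ptA x - q x) + l1 (fun x => q x - r x) := by
    unfold l1
    rw [← Finset.sum_add_distrib]
    refine Finset.sum_le_sum fun x _ => ?_
    exact abs_sub_le _ _ _
  linarith
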